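/- Let $b > e$ and $\sigma, d > 0$. Define $\tilde{b} = b(2\pi/\sigma)^{-d/2}$ and $\tilde{u} = \frac{\log \tilde{b}}{\sigma} + \frac{d}{2\sigma}\log\left(\frac{\log \tilde{b}}{\sigma}\right) + \left(\frac{d}{2}\right)^2 \frac{\log((\log \tilde{b})/\sigma)}{\sigma \log \tilde{b}}$. Let $u$ be the solution of $(2\pi/\sigma)^{d/2} u^{-d/2} e^{\sigma u} = b$ for large $b$. Then $u - \tilde{u} = o(u^{-1})$ as $b \to \infty$. -/

import Mathlib

open Real Filter

theorem stmt7 (σ : ℝ) (hσ : 0 < σ) (d : ℕ) (hd : 1 ≤ d)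
    (u : ℝ → ℝ)
    (hu : ∀ᶠ b : ℝ in atTop, u b > (d : ℝ) / (2 * σ) ∧
      (2 * π / σ) ^ ((d : ℝ) / 2) * u b ^ (-(d : ℝ) / 2) * exp (σ * u b) = b)
    (ut : ℝ → ℝ)
    (hut : ∀ b : ℝ, ut b =
      log (b * (2 * π / σ) ^ (-(d : ℝ) / 2)) / σ
      + (d : ℝ) / (2 * σ) * log (log (b * (2 * π / σ) ^ (-(d : ℝ) / 2)) / σ)
      + ((d : ℝ) / 2) ^ 2 * log (log (b * (2 * π / σ) ^ (-(d : ℝ) / 2)) / σ)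
          / (σ * log (b * (2 * π / σ) ^ (-(d : ℝ) / 2)))) :
    Tendsto (fun b => u b * (u b - ut b)) atTop (nhds 0) := by
  have hd0 : (0:ℝ) < (d:ℝ) := by exact_mod_cast Nat.lt_of_lt_of_le Nat.zero_lt_one hd
  set a : ℝ := 2 * π / σ with ha_def
  have ha : 0 < a := by
    have := Real.pi_pos
    positivity
  set k : ℝ := (d:ℝ) / (2 * σ) with hk_def
  have hk : 0 < k := by positivity
  set x : ℝ → ℝ := fun b => (log b + (-(d:ℝ)/2) * log a) / σ with hx_def
  have hx : Tendsto x atTop atTop :=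
    ((tendsto_atTop_add_const_right atTop _ tendsto_log_atTop).atTop_div_const hσ)
  -- structural facts
  have hud : ∀ᶠ b in atTop, 0 < u b ∧ u b = x b + k * log (u b) ∧ u b > (d:ℝ)/(2*σ) := by
    filter_upwards [hu, eventually_gt_atTop (0:ℝ)] with b hb hb0
    have hupos : 0 < u b := lt_trans (by positivity) hb.1
    refine ⟨hupos, ?_, hb.1⟩
    have h1 := congrArg log hb.2
    rw [log_mul (by positivity) (exp_ne_zero _),
      log_mul (by positivity) (by positivity), log_rpow ha, log_rpow hupos,
      log_exp] at h1
    simp only [hx_def, hk_def]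
    field_simp
    linarith
  -- u tends to infinity
  have hU : Tendsto u atTop atTop := by
    have hmono : ∀ᶠ b in atTop, x b + k * log ((d:ℝ)/(2*σ)) ≤ u b := by
      filter_upwards [hud] with b ⟨hb1, hb2, hb3⟩
      have : log ((d:ℝ)/(2*σ)) ≤ log (u b) :=
        Real.log_le_log (by positivity) hb3.le
      nlinarith
    exact tendsto_atTop_mono' _ hmono
      (tendsto_atTop_add_const_right atTop _ hx)
  -- log u / u → 0
  have hp : Tendsto (fun b => log (u b) / u b) atTop (nhds 0) := by
    have h := (Real.tendsto_pow_log_div_mul_add_atTop 1 0 1 one_ne_zero).comp hU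
    simpa [Function.comp_def] using h
  -- (log u)^2 / u → 0
  have hq : Tendsto (fun b => (log (u b))^2 / u b) atTop (nhds 0) := by
    have h := (Real.tendsto_pow_log_div_mul_add_atTop 1 0 2 one_ne_zero).comp hU
    simpa [Function.comp_def] using h
  -- u / x → 1
  have hr : Tendsto (fun b => u b / x b) atTop (nhds 1) := by
    have h1 : Tendsto (fun b => (1 - k * (log (u b) / u b))⁻¹) atTop (nhds 1) := by
      have := ((tendsto_const_nhds (x := (1:ℝ))).sub (hp.const_mul k)).inv₀ (by norm_num)
      simpa using this
    refine h1.congr' ?_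
    filter_upwards [hud, hx.eventually_gt_atTop 0] with b ⟨hb1, hb2, _⟩ hxb
    have hune : u b ≠ 0 := hb1.ne'
    have hxne : x b ≠ 0 := hxb.ne'
    have : 1 - k * (log (u b) / u b) = x b / u b := by
      field_simp
      linarith
    rw [this, inv_div]
  -- log (u/x) → 0
  have hlr : Tendsto (fun b => log (u b / x b)) atTop (nhds 0) := by
    have h := (Real.continuousAt_log one_ne_zero).tendsto.comp hr
    simpa [Function.comp_def] using h
  -- t = k * log u / x → 0
  have ht : Tendsto (fun b => k * log (u b) / x b) atTop (nhds 0) := by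
    have h := (hp.const_mul k).mul hr
    rw [mul_zero, zero_mul] at h
    refine h.congr' ?_
    filter_upwards [hud] with b ⟨hb1, _, _⟩
    have hune : u b ≠ 0 := hb1.ne'
    field_simp
  -- F2
  have hF2 : Tendsto (fun b => (u b / x b) * log (u b / x b)) atTop (nhds 0) := by
    have := hr.mul hlr
    simpa using this
  -- F1 via squeeze
  have hF1 : Tendsto (fun b => u b * (log (u b / x b) - k * log (u b) / x b))
      atTop (nhds 0) := by
    apply squeeze_zero_norm'
      (a := fun b => 2 * k^2 * ((u b / x b)^2 * ((log (u b))^2 / u b)))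
    · filter_upwards [hud, hx.eventually_gt_atTop 0,
        ht.eventually (gt_mem_nhds (by norm_num : (0:ℝ) < 1/2)),
        (ht.eventually (eventually_abs_sub_lt 0 (by norm_num : (0:ℝ) < 1/2)))]
        with b ⟨hb1, hb2, _⟩ hxb htb habs
      set t : ℝ := k * log (u b) / x b with ht_def
      have habs' : |t| ≤ 1/2 := by
        rw [sub_zero] at habs; exact habs.le
      have hx1 : u b / x b = 1 + t := by
        rw [hb2]; field_simp [ht_def]; rw [ht_def]; field_simp
      have key := Real.abs_log_sub_add_sum_range_le (x := -t)
        (by rw [abs_neg]; linarith) 1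
      simp only [Finset.sum_range_one, pow_one, Nat.cast_zero, zero_add, div_one,
        sub_neg_eq_add] at key
      -- key : |-t + log (1 + t)| ≤ |-t| ^ 2 / (1 - |-t|)
      rw [abs_neg] at key
      norm_num at key
      have h1t : (0:ℝ) < 1 - |t| := by linarith
      have key2 : |log (1 + t) - t| ≤ 2 * t^2 := by
        have h2 : t^2 / (1 - |t|) ≤ 2 * t^2 := by
          rw [div_le_iff₀ h1t]
          nlinarith [sq_nonneg t, abs_nonneg t]
        calc |log (1 + t) - t| = |-t + log (1 + t)| := by rw [neg_add_eq_sub]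
          _ ≤ t^2 / (1 - |t|) := key
          _ ≤ 2 * t^2 := h2
      rw [hx1]
      have : ‖u b * (log (1 + t) - t)‖ = u b * |log (1 + t) - t| := by
        rw [norm_mul, Real.norm_eq_abs, Real.norm_eq_abs, abs_of_pos hb1]
      rw [this]
      have hle : u b * |log (1 + t) - t| ≤ u b * (2 * t^2) :=
        mul_le_mul_of_nonneg_left key2 hb1.le
      refine hle.trans (le_of_eq ?_)
      have hgen : ∀ U X L : ℝ, U ≠ 0 → X ≠ 0 →
          U * (2 * (k * L / X)^2) = 2 * k^2 * ((U / X)^2 * (L^2 / U)) := by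
        intro U X L hU hX
        field_simp
      rw [← hx1, ht_def]
      exact hgen (u b) (x b) (log (u b)) hb1.ne' hxb.ne'
    · have h := ((hr.pow 2).mul hq).const_mul (2 * k^2)
      simpa using h
  -- combine
  have hmain : Tendsto (fun b =>
      k * (u b * (log (u b / x b) - k * log (u b) / x b))
      + k^2 * ((u b / x b) * log (u b / x b))) atTop (nhds 0) := by
    have := (hF1.const_mul k).add (hF2.const_mul (k^2))
    simpa only [mul_zero, add_zero] using this
  have key : ∀ U X LU LX : ℝ, X ≠ 0 → U = X + k * LU →
      k * (U * (LU - LX - k * LU / X)) + k ^ 2 * (U / X * (LU - LX))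
      = U * (U - (X + k * LX + ((d:ℝ) / 2) ^ 2 * LX / (σ * (σ * X)))) := by
    intro U X LU LX hX hUeq
    subst hUeq
    simp only [hk_def]
    field_simp
    ring
  refine hmain.congr' ?_
  filter_upwards [hud, hx.eventually_gt_atTop 0, eventually_gt_atTop (0:ℝ)]
    with b ⟨hb1, hb2, _⟩ hxb hb0
  have hune : u b ≠ 0 := hb1.ne'
  have hxne : x b ≠ 0 := hxb.ne'
  have hlogb : log (b * a ^ (-(d:ℝ) / 2)) = σ * x b := by
    rw [log_mul hb0.ne' (by positivity), log_rpow ha]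
    simp only [hx_def]
    field_simp
  have hsx : σ * x b / σ = x b := by field_simp
  have hlogdiv : log (u b / x b) = log (u b) - log (x b) := log_div hune hxne
  rw [hut b, hlogb, hsx, hlogdiv]
  exact key (u b) (x b) (log (u b)) (log (x b)) hxne hb2
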